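/- Let E and F be real inner product spaces, let n ≥ 1, and let G : Fin n → E → F be a mean-square L-Lipschitz family with mean Ḡ, and suppose in addition the variance bound (1/n) ∑_{i : Fin n} ‖G i z − Ḡ z‖² ≤ σ² holds for all z ∈ E. Fix K ≥ 0, batch sizes b₁ ≥ 1 and b₂ ≥ 1, and points x : ℕ → E. For each pair (s₁, s₂) with s₁ : Fin b₁ → Fin n and s₂ : Fin K → (Fin b₂ → Fin n), define v : ℕ → F by v 0 = (1/b₁) ∑_{j : Fin b₁} G (s₁ j) (x 0) and, for k < K, v (k+1) = (1/b₂) ∑_{j : Fin b₂} (G (s₂ k j) (x (k+1)) − G (s₂ k j) (x k)) + v k. Then the average over all pairs (s₁, s₂) of ‖v K − Ḡ (x K)‖² is at most σ²/b₁ + (L²/b₂) ∑_{k=0}^{K−1} ‖x (k+1) − x k‖². (Lemma 1 of the paper — the bounded gradient estimation error of R-SPIDER conditioned on the iterates — specialized to Euclidean space.) -/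

import Mathlib

open Finset
open scoped RealInnerProductSpace

section aux
variable {F : Type*} [NormedAddCommGroup F] [InnerProductSpace ℝ F] {n : ℕ}

lemma aux_coord {α M : Type*} [Fintype α] [DecidableEq α] [AddCommMonoid M]
    (h : Fin n → M) (j : α) :
    ∑ s : α → Fin n, h (s j)
      = Fintype.card ({j' : α // j' ≠ j} → Fin n) • ∑ i, h i := by
  rw [Fintype.sum_equiv (Equiv.funSplitAt j (Fin n))
    (fun s => h (s j)) (fun p => h p.1) (fun s => rfl), Fintype.sum_prod_type]
  simp [Finset.sum_const, ← Finset.smul_sum, Finset.sum_comm]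

lemma aux_coord_zero {α M : Type*} [Fintype α] [DecidableEq α] [AddCommMonoid M]
    (h : Fin n → M) (hh : ∑ i, h i = 0) (j : α) :
    ∑ s : α → Fin n, h (s j) = 0 := by
  rw [aux_coord h j, hh, smul_zero]

lemma aux_off {α : Type*} [Fintype α] [DecidableEq α]
    (g : Fin n → F) (hg : ∑ i, g i = 0) {j j' : α} (hne : j' ≠ j) :
    ∑ s : α → Fin n, ⟪g (s j), g (s j')⟫ = 0 := by
  rw [Fintype.sum_equiv (Equiv.funSplitAt j (Fin n))
    (fun s => ⟪g (s j), g (s j')⟫)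
    (fun p => ⟪g p.1, g (p.2 ⟨j', hne⟩)⟫) (fun s => rfl),
    Fintype.sum_prod_type]
  refine Finset.sum_eq_zero fun t _ => ?_
  have : ∑ i : Fin n, ⟪g t, g i⟫ = 0 := by
    rw [← inner_sum, hg, inner_zero_right]
  exact aux_coord_zero (fun i => ⟪g t, g i⟫) this (⟨j', hne⟩ : {j'' : α // j'' ≠ j})

lemma var_sum {α : Type*} [Fintype α] [DecidableEq α]
    (g : Fin n → F) (hg : ∑ i, g i = 0) :
    ∑ s : α → Fin n, ‖∑ j : α, g (s j)‖ ^ 2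
      = (Fintype.card α : ℝ) * (n : ℝ) ^ (Fintype.card α - 1) * ∑ i, ‖g i‖ ^ 2 := by
  have hexp : ∀ s : α → Fin n, ‖∑ j : α, g (s j)‖ ^ 2
      = ∑ j : α, ∑ j' : α, ⟪g (s j), g (s j')⟫ := by
    intro s
    rw [← real_inner_self_eq_norm_sq, sum_inner]
    exact Finset.sum_congr rfl fun j _ => inner_sum _ _ _
  simp_rw [hexp]
  rw [Finset.sum_comm]
  have hj : ∀ j : α, ∑ s : α → Fin n, ∑ j' : α, ⟪g (s j), g (s j')⟫
      = (n : ℝ) ^ (Fintype.card α - 1) * ∑ i, ‖g i‖ ^ 2 := by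
    intro j
    rw [Finset.sum_comm]
    have hsplit : ∀ j' : α, ∑ s : α → Fin n, ⟪g (s j), g (s j')⟫
        = if j' = j then (n : ℝ) ^ (Fintype.card α - 1) * ∑ i, ‖g i‖ ^ 2 else 0 := by
      intro j'
      by_cases h : j' = j
      · subst h
        rw [if_pos rfl, aux_coord (fun i => ⟪g i, g i⟫) j', nsmul_eq_mul]
        congr 1
        · rw [Fintype.card_fun, Fintype.card_fin]
          push_cast [Fintype.card_subtype_compl]
          simp
        · exact Finset.sum_congr rfl fun i _ => real_inner_self_eq_norm_sq _
      · rw [if_neg h]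
        exact aux_off g hg h
    rw [Finset.sum_congr rfl fun j' _ => hsplit j']
    simp
  rw [Finset.sum_congr rfl fun j _ => hj j, Finset.sum_const, nsmul_eq_mul,
    Finset.card_univ, mul_assoc]

lemma center_le (hn : 1 ≤ n) (y : Fin n → F) :
    ∑ i, ‖y i - (1 / (n : ℝ)) • ∑ i', y i'‖ ^ 2 ≤ ∑ i, ‖y i‖ ^ 2 := by
  have hn0 : (0 : ℝ) < n := by exact_mod_cast hn
  set μ : F := (1 / (n : ℝ)) • ∑ i', y i' with hμ
  have hsum : ∑ i : Fin n, y i = (n : ℝ) • μ := by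
    rw [hμ, smul_smul]
    field_simp
    rw [one_smul]
  have hexp : ∀ i, ‖y i - μ‖ ^ 2 = ‖y i‖ ^ 2 - 2 * ⟪y i, μ⟫ + ‖μ‖ ^ 2 :=
    fun i => norm_sub_sq_real _ _
  rw [Finset.sum_congr rfl fun i _ => hexp i]
  rw [Finset.sum_add_distrib, Finset.sum_sub_distrib, Finset.sum_const,
    ← Finset.mul_sum, ← sum_inner, hsum, real_inner_smul_left,
    real_inner_self_eq_norm_sq, Finset.card_univ, Fintype.card_fin, nsmul_eq_mul]
  nlinarith [sq_nonneg ‖μ‖, hn0]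

lemma key {b : ℕ} (hn : 1 ≤ n) (hb : 1 ≤ b) (g : Fin n → F) (hg : ∑ i, g i = 0)
    {B : ℝ} (hB : (1 / (n : ℝ)) * ∑ i, ‖g i‖ ^ 2 ≤ B) :
    ∑ s : Fin b → Fin n, ‖(1 / (b : ℝ)) • ∑ j : Fin b, g (s j)‖ ^ 2
      ≤ (n : ℝ) ^ b * (B / b) := by
  have hn0 : (0 : ℝ) < n := by exact_mod_cast hn
  have hb0 : (0 : ℝ) < b := by exact_mod_cast hb
  have h1 : ∀ y : F, ‖(1 / (b : ℝ)) • y‖ ^ 2 = (1 / (b : ℝ)) ^ 2 * ‖y‖ ^ 2 := by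
    intro y
    rw [norm_smul, mul_pow, Real.norm_eq_abs, sq_abs]
  rw [Finset.sum_congr rfl fun s _ => h1 _, ← Finset.mul_sum, var_sum g hg]
  have hcard : (Fintype.card (Fin b) : ℝ) = b := by simp
  have hS : ∑ i, ‖g i‖ ^ 2 ≤ (n : ℝ) * B := by
    rw [one_div, inv_mul_le_iff₀ hn0] at hB
    exact hB
  have hpow : (n : ℝ) ^ (Fintype.card (Fin b) - 1) * n = (n : ℝ) ^ b := by
    rw [Fintype.card_fin, ← pow_succ, Nat.sub_add_cancel hb]
  rw [hcard]
  calc (1 / (b : ℝ)) ^ 2 * ((b : ℝ) * (n : ℝ) ^ (Fintype.card (Fin b) - 1) * ∑ i, ‖g i‖ ^ 2)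
      ≤ (1 / (b : ℝ)) ^ 2 * ((b : ℝ) * (n : ℝ) ^ (Fintype.card (Fin b) - 1) * ((n : ℝ) * B)) := by
        have hp : (0:ℝ) ≤ (n : ℝ) ^ (Fintype.card (Fin b) - 1) := by positivity
        gcongr
    _ = (n : ℝ) ^ b * (B / b) := by
        rw [show (b:ℝ) * (n : ℝ) ^ (Fintype.card (Fin b) - 1) * ((n:ℝ) * B)
          = (b:ℝ) * ((n : ℝ) ^ (Fintype.card (Fin b) - 1) * (n:ℝ)) * B by ring, hpow]
        field_simp

end aux


set_option maxHeartbeats 1000000 in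
theorem stmt_4 {E F : Type*} [NormedAddCommGroup E] [InnerProductSpace ℝ E]
    [NormedAddCommGroup F] [InnerProductSpace ℝ F]
    (n : ℕ) (hn : 1 ≤ n) (L : ℝ) (hL : 0 ≤ L) (G : Fin n → E → F)
    (hlip : ∀ x y : E,
      (1 / (n : ℝ)) * ∑ i : Fin n, ‖G i x - G i y‖ ^ 2 ≤ L ^ 2 * ‖x - y‖ ^ 2)
    (σ : ℝ)
    (hvar : ∀ z : E,
      (1 / (n : ℝ)) *
          ∑ i : Fin n, ‖G i z - (1 / (n : ℝ)) • ∑ i' : Fin n, G i' z‖ ^ 2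
        ≤ σ ^ 2)
    (K : ℕ) (b₁ b₂ : ℕ) (hb₁ : 1 ≤ b₁) (hb₂ : 1 ≤ b₂) (x : ℕ → E)
    (v : (Fin b₁ → Fin n) → (Fin K → Fin b₂ → Fin n) → ℕ → F)
    (hv0 : ∀ s₁ s₂, v s₁ s₂ 0 = (1 / (b₁ : ℝ)) • ∑ j : Fin b₁, G (s₁ j) (x 0))
    (hvrec : ∀ s₁ s₂, ∀ k, ∀ hk : k < K,
      v s₁ s₂ (k + 1) =
        ((1 / (b₂ : ℝ)) • ∑ j : Fin b₂,
            (G (s₂ ⟨k, hk⟩ j) (x (k + 1)) - G (s₂ ⟨k, hk⟩ j) (x k)))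
          + v s₁ s₂ k) :
    (1 / ((n : ℝ) ^ b₁ * ((n : ℝ) ^ b₂) ^ K)) *
        ∑ s₁ : Fin b₁ → Fin n, ∑ s₂ : Fin K → Fin b₂ → Fin n,
          ‖v s₁ s₂ K - (1 / (n : ℝ)) • ∑ i : Fin n, G i (x K)‖ ^ 2
      ≤ σ ^ 2 / (b₁ : ℝ)
          + (L ^ 2 / (b₂ : ℝ)) * ∑ k ∈ Finset.range K, ‖x (k + 1) - x k‖ ^ 2 := by
  classical
  have hn0 : (0 : ℝ) < n := by exact_mod_cast hn
  have hb₁0 : (0 : ℝ) < b₁ := by exact_mod_cast hb₁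
  have hb₂0 : (0 : ℝ) < b₂ := by exact_mod_cast hb₂
  have hmean : ∀ z : E,
      ∑ i : Fin n, (G i z - (1 / (n : ℝ)) • ∑ i' : Fin n, G i' z) = 0 := by
    intro z
    rw [Finset.sum_sub_distrib, Finset.sum_const, Finset.card_univ, Fintype.card_fin,
      sub_eq_zero, ← Nat.cast_smul_eq_nsmul ℝ, smul_smul]
    rw [show (n : ℝ) * (1 / n) = 1 by field_simp, one_smul]
  -- v at time k depends on s₂ only through indices < k
  have hdep : ∀ (s₁ : Fin b₁ → Fin n) (k : ℕ), k ≤ K →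
      ∀ s₂ s₂' : Fin K → Fin b₂ → Fin n,
      (∀ j : Fin K, (j : ℕ) < k → s₂ j = s₂' j) → v s₁ s₂ k = v s₁ s₂' k := by
    intro s₁ k
    induction k with
    | zero => intro _ s₂ s₂' _; rw [hv0, hv0]
    | succ k ih =>
      intro hk s₂ s₂' h
      have hkK : k < K := hk
      rw [hvrec s₁ s₂ k hkK, hvrec s₁ s₂' k hkK,
        h ⟨k, hkK⟩ (Nat.lt_succ_self k),
        ih hkK.le s₂ s₂' fun j hj => h j (hj.trans (Nat.lt_succ_self k))]
  -- one-step estimate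
  have hstep : ∀ (s₁ : Fin b₁ → Fin n) (k : ℕ), ∀ hk : k < K,
      ∑ s₂ : Fin K → Fin b₂ → Fin n,
          ‖v s₁ s₂ (k + 1) - (1 / (n : ℝ)) • ∑ i : Fin n, G i (x (k + 1))‖ ^ 2
        ≤ (∑ s₂ : Fin K → Fin b₂ → Fin n,
            ‖v s₁ s₂ k - (1 / (n : ℝ)) • ∑ i : Fin n, G i (x k)‖ ^ 2)
          + ((n : ℝ) ^ b₂) ^ K * (L ^ 2 / b₂ * ‖x (k + 1) - x k‖ ^ 2) := by
    intro s₁ k hk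
    have hcenter : ∀ y : Fin n → F, ∑ i, (y i - (1 / (n : ℝ)) • ∑ i', y i') = 0 := by
      intro y
      rw [Finset.sum_sub_distrib, Finset.sum_const, Finset.card_univ, Fintype.card_fin,
        sub_eq_zero, ← Nat.cast_smul_eq_nsmul ℝ, smul_smul,
        show (n : ℝ) * (1 / n) = 1 by field_simp, one_smul]
    set g : Fin n → F := fun i =>
      (G i (x (k + 1)) - G i (x k))
        - (1 / (n : ℝ)) • ∑ i' : Fin n, (G i' (x (k + 1)) - G i' (x k)) with hgdef
    have hg : ∑ i, g i = 0 := hcenter (fun i => G i (x (k + 1)) - G i (x k))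
    have hB : (1 / (n : ℝ)) * ∑ i, ‖g i‖ ^ 2 ≤ L ^ 2 * ‖x (k + 1) - x k‖ ^ 2 := by
      calc (1 / (n : ℝ)) * ∑ i, ‖g i‖ ^ 2
          ≤ (1 / (n : ℝ)) * ∑ i, ‖G i (x (k + 1)) - G i (x k)‖ ^ 2 := by
            apply mul_le_mul_of_nonneg_left _ (by positivity)
            exact center_le hn (fun i => G i (x (k + 1)) - G i (x k))
        _ ≤ L ^ 2 * ‖x (k + 1) - x k‖ ^ 2 := hlip _ _
    set d : (Fin b₂ → Fin n) → F := fun t => (1 / (b₂ : ℝ)) • ∑ j : Fin b₂, g (t j)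
      with hddef
    have hd0 : ∑ t : Fin b₂ → Fin n, d t = 0 := by
      simp only [hddef]
      rw [← Finset.smul_sum, Finset.sum_comm,
        Finset.sum_congr rfl fun j _ => aux_coord_zero g hg j]
      simp
    have hdvar : ∑ t : Fin b₂ → Fin n, ‖d t‖ ^ 2
        ≤ (n : ℝ) ^ b₂ * ((L ^ 2 * ‖x (k + 1) - x k‖ ^ 2) / b₂) :=
      key hn hb₂ g hg hB
    have hrw : ∀ s₂ : Fin K → Fin b₂ → Fin n,
        v s₁ s₂ (k + 1) - (1 / (n : ℝ)) • ∑ i : Fin n, G i (x (k + 1))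
          = (v s₁ s₂ k - (1 / (n : ℝ)) • ∑ i : Fin n, G i (x k)) + d (s₂ ⟨k, hk⟩) := by
      intro s₂
      rw [hvrec s₁ s₂ k hk]
      have h3 : ∑ j : Fin b₂, g (s₂ ⟨k, hk⟩ j)
          = (∑ j : Fin b₂, (G (s₂ ⟨k, hk⟩ j) (x (k + 1)) - G (s₂ ⟨k, hk⟩ j) (x k)))
            - (b₂ : ℕ) • ((1 / (n : ℝ)) •
                ∑ i' : Fin n, (G i' (x (k + 1)) - G i' (x k))) := by
        simp only [hgdef]
        rw [Finset.sum_sub_distrib, Finset.sum_const, Finset.card_univ, Fintype.card_fin]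
      have h2 : d (s₂ ⟨k, hk⟩)
          = ((1 / (b₂ : ℝ)) • ∑ j : Fin b₂,
              (G (s₂ ⟨k, hk⟩ j) (x (k + 1)) - G (s₂ ⟨k, hk⟩ j) (x k)))
            - ((1 / (n : ℝ)) • ∑ i : Fin n, G i (x (k + 1))
              - (1 / (n : ℝ)) • ∑ i : Fin n, G i (x k)) := by
        simp only [hddef]
        rw [h3, smul_sub, ← Nat.cast_smul_eq_nsmul ℝ, smul_smul, smul_smul,
          show (1 / (b₂ : ℝ)) * (b₂ : ℝ) * (1 / (n : ℝ)) = 1 / (n : ℝ) by field_simp,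
          Finset.sum_sub_distrib, smul_sub, Finset.sum_sub_distrib, smul_sub]
      rw [h2]
      abel
    set ek : Fin K := ⟨k, hk⟩ with hek
    set c : ({j : Fin K // j ≠ ek} → Fin b₂ → Fin n) → F := fun r =>
      v s₁ ((Equiv.funSplitAt ek (Fin b₂ → Fin n)).symm (fun _ => ⟨0, hn⟩, r)) k
        - (1 / (n : ℝ)) • ∑ i : Fin n, G i (x k) with hcdef
    have hvc : ∀ (t : Fin b₂ → Fin n) (r : {j : Fin K // j ≠ ek} → Fin b₂ → Fin n),
        v s₁ ((Equiv.funSplitAt ek (Fin b₂ → Fin n)).symm (t, r)) k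
          - (1 / (n : ℝ)) • ∑ i : Fin n, G i (x k) = c r := by
      intro t r
      have hv : v s₁ ((Equiv.funSplitAt ek (Fin b₂ → Fin n)).symm (t, r)) k
          = v s₁ ((Equiv.funSplitAt ek (Fin b₂ → Fin n)).symm (fun _ => ⟨0, hn⟩, r)) k := by
        apply hdep s₁ k hk.le
        intro j hj
        have hne : j ≠ ek := by
          intro hje
          rw [hje, hek] at hj
          exact absurd hj (by simp)
        simp [Equiv.funSplitAt_symm_apply, hne]
      rw [hcdef, hv]
    have hat : ∀ (t : Fin b₂ → Fin n) (r : {j : Fin K // j ≠ ek} → Fin b₂ → Fin n),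
        ((Equiv.funSplitAt ek (Fin b₂ → Fin n)).symm (t, r)) ek = t := by
      intro t r
      simp [Equiv.funSplitAt_symm_apply]
    have hTk : ∑ s₂ : Fin K → Fin b₂ → Fin n,
        ‖v s₁ s₂ k - (1 / (n : ℝ)) • ∑ i : Fin n, G i (x k)‖ ^ 2
        = ∑ t : Fin b₂ → Fin n, ∑ r : {j : Fin K // j ≠ ek} → Fin b₂ → Fin n,
            ‖c r‖ ^ 2 := by
      refine Eq.symm ?_
      calc ∑ t : Fin b₂ → Fin n, ∑ r : {j : Fin K // j ≠ ek} → Fin b₂ → Fin n, ‖c r‖ ^ 2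
          = ∑ p : (Fin b₂ → Fin n) × ({j : Fin K // j ≠ ek} → Fin b₂ → Fin n),
              ‖c p.2‖ ^ 2 := (Fintype.sum_prod_type (fun p => ‖c p.2‖ ^ 2)).symm
        _ = ∑ s₂ : Fin K → Fin b₂ → Fin n,
              ‖v s₁ s₂ k - (1 / (n : ℝ)) • ∑ i : Fin n, G i (x k)‖ ^ 2 :=
            Fintype.sum_equiv (Equiv.funSplitAt ek (Fin b₂ → Fin n)).symm _ _
              (fun ⟨t, r⟩ => by rw [hvc t r])
    have hTk1 : ∑ s₂ : Fin K → Fin b₂ → Fin n,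
        ‖v s₁ s₂ (k + 1) - (1 / (n : ℝ)) • ∑ i : Fin n, G i (x (k + 1))‖ ^ 2
        = ∑ t : Fin b₂ → Fin n, ∑ r : {j : Fin K // j ≠ ek} → Fin b₂ → Fin n,
            ‖c r + d t‖ ^ 2 := by
      rw [Finset.sum_congr rfl fun s₂ _ => by rw [hrw s₂]]
      refine Eq.symm ?_
      calc ∑ t : Fin b₂ → Fin n, ∑ r : {j : Fin K // j ≠ ek} → Fin b₂ → Fin n,
            ‖c r + d t‖ ^ 2
          = ∑ p : (Fin b₂ → Fin n) × ({j : Fin K // j ≠ ek} → Fin b₂ → Fin n),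
              ‖c p.2 + d p.1‖ ^ 2 := (Fintype.sum_prod_type (fun p => ‖c p.2 + d p.1‖ ^ 2)).symm
        _ = ∑ s₂ : Fin K → Fin b₂ → Fin n,
              ‖(v s₁ s₂ k - (1 / (n : ℝ)) • ∑ i : Fin n, G i (x k)) + d (s₂ ek)‖ ^ 2 :=
            Fintype.sum_equiv (Equiv.funSplitAt ek (Fin b₂ → Fin n)).symm _ _
              (fun ⟨t, r⟩ => by rw [hat t r, hvc t r])
    have hper : ∀ r : {j : Fin K // j ≠ ek} → Fin b₂ → Fin n,
        ∑ t : Fin b₂ → Fin n, ‖c r + d t‖ ^ 2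
          = (Fintype.card (Fin b₂ → Fin n) : ℝ) * ‖c r‖ ^ 2
            + ∑ t : Fin b₂ → Fin n, ‖d t‖ ^ 2 := by
      intro r
      rw [Finset.sum_congr rfl fun t _ => norm_add_sq_real (c r) (d t),
        Finset.sum_add_distrib, Finset.sum_add_distrib, ← Finset.mul_sum, ← inner_sum,
        hd0, inner_zero_right, mul_zero, add_zero, Finset.sum_const, Finset.card_univ,
        nsmul_eq_mul]
    have hK1 : 1 ≤ K := by omega
    have hcardR : (Fintype.card ({j : Fin K // j ≠ ek} → Fin b₂ → Fin n) : ℝ)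
        * ((n : ℝ) ^ b₂ * ((L ^ 2 * ‖x (k + 1) - x k‖ ^ 2) / b₂))
        = ((n : ℝ) ^ b₂) ^ K * (L ^ 2 / b₂ * ‖x (k + 1) - x k‖ ^ 2) := by
      have h1 : (Fintype.card ({j : Fin K // j ≠ ek} → Fin b₂ → Fin n) : ℝ)
          = ((n : ℝ) ^ b₂) ^ (K - 1) := by
        simp [Fintype.card_fun, Fintype.card_subtype_compl]
      rw [h1, show ((n : ℝ) ^ b₂) ^ (K - 1) * ((n : ℝ) ^ b₂
            * ((L ^ 2 * ‖x (k + 1) - x k‖ ^ 2) / b₂))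
          = (((n : ℝ) ^ b₂) ^ (K - 1) * (n : ℝ) ^ b₂)
            * ((L ^ 2 * ‖x (k + 1) - x k‖ ^ 2) / b₂) by ring,
        ← pow_succ, Nat.sub_add_cancel hK1]
      ring
    calc ∑ s₂ : Fin K → Fin b₂ → Fin n,
        ‖v s₁ s₂ (k + 1) - (1 / (n : ℝ)) • ∑ i : Fin n, G i (x (k + 1))‖ ^ 2
        = ∑ r : {j : Fin K // j ≠ ek} → Fin b₂ → Fin n, ∑ t : Fin b₂ → Fin n,
            ‖c r + d t‖ ^ 2 := by rw [hTk1]; exact Finset.sum_comm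
      _ = ∑ r : {j : Fin K // j ≠ ek} → Fin b₂ → Fin n,
            ((Fintype.card (Fin b₂ → Fin n) : ℝ) * ‖c r‖ ^ 2
              + ∑ t : Fin b₂ → Fin n, ‖d t‖ ^ 2) :=
          Finset.sum_congr rfl fun r _ => hper r
      _ = (Fintype.card (Fin b₂ → Fin n) : ℝ)
            * (∑ r : {j : Fin K // j ≠ ek} → Fin b₂ → Fin n, ‖c r‖ ^ 2)
          + (Fintype.card ({j : Fin K // j ≠ ek} → Fin b₂ → Fin n) : ℝ)
            * ∑ t : Fin b₂ → Fin n, ‖d t‖ ^ 2 := by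
          rw [Finset.sum_add_distrib, ← Finset.mul_sum, Finset.sum_const,
            Finset.card_univ, nsmul_eq_mul]
      _ = (∑ s₂ : Fin K → Fin b₂ → Fin n,
            ‖v s₁ s₂ k - (1 / (n : ℝ)) • ∑ i : Fin n, G i (x k)‖ ^ 2)
          + (Fintype.card ({j : Fin K // j ≠ ek} → Fin b₂ → Fin n) : ℝ)
            * ∑ t : Fin b₂ → Fin n, ‖d t‖ ^ 2 := by
          rw [hTk, Finset.sum_congr rfl fun t (_ : t ∈ Finset.univ) =>
            (rfl : ∑ r : {j : Fin K // j ≠ ek} → Fin b₂ → Fin n, ‖c r‖ ^ 2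
              = ∑ r : {j : Fin K // j ≠ ek} → Fin b₂ → Fin n, ‖c r‖ ^ 2),
            Finset.sum_const, Finset.card_univ, nsmul_eq_mul]
      _ ≤ (∑ s₂ : Fin K → Fin b₂ → Fin n,
            ‖v s₁ s₂ k - (1 / (n : ℝ)) • ∑ i : Fin n, G i (x k)‖ ^ 2)
          + (Fintype.card ({j : Fin K // j ≠ ek} → Fin b₂ → Fin n) : ℝ)
            * ((n : ℝ) ^ b₂ * ((L ^ 2 * ‖x (k + 1) - x k‖ ^ 2) / b₂)) := by
          have : (0 : ℝ) ≤ (Fintype.card ({j : Fin K // j ≠ ek} → Fin b₂ → Fin n) : ℝ) := by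
            positivity
          nlinarith [hdvar]
      _ = (∑ s₂ : Fin K → Fin b₂ → Fin n,
            ‖v s₁ s₂ k - (1 / (n : ℝ)) • ∑ i : Fin n, G i (x k)‖ ^ 2)
          + ((n : ℝ) ^ b₂) ^ K * (L ^ 2 / b₂ * ‖x (k + 1) - x k‖ ^ 2) := by
          rw [hcardR]
  -- induction
  have hind : ∀ (s₁ : Fin b₁ → Fin n) (k : ℕ), k ≤ K →
      ∑ s₂ : Fin K → Fin b₂ → Fin n,
          ‖v s₁ s₂ k - (1 / (n : ℝ)) • ∑ i : Fin n, G i (x k)‖ ^ 2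
        ≤ ((n : ℝ) ^ b₂) ^ K *
          (‖(1 / (b₁ : ℝ)) • (∑ j : Fin b₁, G (s₁ j) (x 0))
              - (1 / (n : ℝ)) • ∑ i : Fin n, G i (x 0)‖ ^ 2
            + L ^ 2 / b₂ * ∑ j ∈ Finset.range k, ‖x (j + 1) - x j‖ ^ 2) := by
    intro s₁ k
    induction k with
    | zero =>
      intro _
      rw [Finset.sum_congr rfl fun s₂ _ => by rw [hv0 s₁ s₂]]
      rw [Finset.sum_const, Finset.card_univ, nsmul_eq_mul]
      have hc : ((Fintype.card (Fin K → Fin b₂ → Fin n) : ℕ) : ℝ) = ((n : ℝ) ^ b₂) ^ K := by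
        simp [Fintype.card_fun]
      rw [hc]
      simp
    | succ k ih =>
      intro hk
      have hkK : k < K := hk
      calc ∑ s₂ : Fin K → Fin b₂ → Fin n,
          ‖v s₁ s₂ (k + 1) - (1 / (n : ℝ)) • ∑ i : Fin n, G i (x (k + 1))‖ ^ 2
          ≤ (∑ s₂ : Fin K → Fin b₂ → Fin n,
              ‖v s₁ s₂ k - (1 / (n : ℝ)) • ∑ i : Fin n, G i (x k)‖ ^ 2)
            + ((n : ℝ) ^ b₂) ^ K * (L ^ 2 / b₂ * ‖x (k + 1) - x k‖ ^ 2) :=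
            hstep s₁ k hkK
        _ ≤ ((n : ℝ) ^ b₂) ^ K *
              (‖(1 / (b₁ : ℝ)) • (∑ j : Fin b₁, G (s₁ j) (x 0))
                  - (1 / (n : ℝ)) • ∑ i : Fin n, G i (x 0)‖ ^ 2
                + L ^ 2 / b₂ * ∑ j ∈ Finset.range k, ‖x (j + 1) - x j‖ ^ 2)
            + ((n : ℝ) ^ b₂) ^ K * (L ^ 2 / b₂ * ‖x (k + 1) - x k‖ ^ 2) := by
            have := ih hkK.le
            linarith
        _ = ((n : ℝ) ^ b₂) ^ K *
              (‖(1 / (b₁ : ℝ)) • (∑ j : Fin b₁, G (s₁ j) (x 0))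
                  - (1 / (n : ℝ)) • ∑ i : Fin n, G i (x 0)‖ ^ 2
                + L ^ 2 / b₂ * ∑ j ∈ Finset.range (k + 1), ‖x (j + 1) - x j‖ ^ 2) := by
            rw [Finset.sum_range_succ]
            ring
  -- initial variance bound
  have hinit : ∑ s₁ : Fin b₁ → Fin n,
      ‖(1 / (b₁ : ℝ)) • (∑ j : Fin b₁, G (s₁ j) (x 0))
          - (1 / (n : ℝ)) • ∑ i : Fin n, G i (x 0)‖ ^ 2
        ≤ (n : ℝ) ^ b₁ * (σ ^ 2 / b₁) := by
    have hrw : ∀ s₁ : Fin b₁ → Fin n,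
        (1 / (b₁ : ℝ)) • (∑ j : Fin b₁, G (s₁ j) (x 0))
            - (1 / (n : ℝ)) • ∑ i : Fin n, G i (x 0)
          = (1 / (b₁ : ℝ)) • ∑ j : Fin b₁,
              (G (s₁ j) (x 0) - (1 / (n : ℝ)) • ∑ i' : Fin n, G i' (x 0)) := by
      intro s₁
      rw [Finset.sum_sub_distrib, Finset.sum_const, Finset.card_univ, Fintype.card_fin,
        smul_sub, ← Nat.cast_smul_eq_nsmul ℝ, smul_smul,
        show (1 / (b₁ : ℝ)) * b₁ = 1 by field_simp, one_smul]
    rw [Finset.sum_congr rfl fun s₁ _ => by rw [hrw s₁]]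
    exact key hn hb₁
      (fun i => G i (x 0) - (1 / (n : ℝ)) • ∑ i' : Fin n, G i' (x 0))
      (hmean (x 0)) (hvar (x 0))
  -- put it together
  have hN : (0 : ℝ) < (n : ℝ) ^ b₁ * ((n : ℝ) ^ b₂) ^ K := by positivity
  rw [one_div, inv_mul_le_iff₀ hN]
  have hC0 : (0 : ℝ) ≤ L ^ 2 / b₂ * ∑ j ∈ Finset.range K, ‖x (j + 1) - x j‖ ^ 2 := by
    positivity
  calc ∑ s₁ : Fin b₁ → Fin n, ∑ s₂ : Fin K → Fin b₂ → Fin n,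
        ‖v s₁ s₂ K - (1 / (n : ℝ)) • ∑ i : Fin n, G i (x K)‖ ^ 2
      ≤ ∑ s₁ : Fin b₁ → Fin n, ((n : ℝ) ^ b₂) ^ K *
          (‖(1 / (b₁ : ℝ)) • (∑ j : Fin b₁, G (s₁ j) (x 0))
              - (1 / (n : ℝ)) • ∑ i : Fin n, G i (x 0)‖ ^ 2
            + L ^ 2 / b₂ * ∑ j ∈ Finset.range K, ‖x (j + 1) - x j‖ ^ 2) :=
        Finset.sum_le_sum fun s₁ _ => hind s₁ K le_rfl
    _ = ((n : ℝ) ^ b₂) ^ K *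
          ((∑ s₁ : Fin b₁ → Fin n,
            ‖(1 / (b₁ : ℝ)) • (∑ j : Fin b₁, G (s₁ j) (x 0))
              - (1 / (n : ℝ)) • ∑ i : Fin n, G i (x 0)‖ ^ 2)
            + (Fintype.card (Fin b₁ → Fin n) : ℝ) *
              (L ^ 2 / b₂ * ∑ j ∈ Finset.range K, ‖x (j + 1) - x j‖ ^ 2)) := by
        rw [← Finset.mul_sum, Finset.sum_add_distrib, Finset.sum_const,
          Finset.card_univ, nsmul_eq_mul]
    _ ≤ ((n : ℝ) ^ b₂) ^ K *
          ((n : ℝ) ^ b₁ * (σ ^ 2 / b₁)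
            + (n : ℝ) ^ b₁ *
              (L ^ 2 / b₂ * ∑ j ∈ Finset.range K, ‖x (j + 1) - x j‖ ^ 2)) := by
        have hcard : (Fintype.card (Fin b₁ → Fin n) : ℝ) = (n : ℝ) ^ b₁ := by
          simp [Fintype.card_fun]
        rw [hcard]
        have : (0 : ℝ) ≤ ((n : ℝ) ^ b₂) ^ K := by positivity
        nlinarith [hinit]
    _ = (n : ℝ) ^ b₁ * ((n : ℝ) ^ b₂) ^ K *
          (σ ^ 2 / b₁ + L ^ 2 / b₂ * ∑ j ∈ Finset.range K, ‖x (j + 1) - x j‖ ^ 2) := by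
        ring
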